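/- Let N ≥ 1 and a be integers with 1 ≤ a ≤ N, let ε, p, q, C be real numbers with ε > 0, p > 1, C > 0, and let (M_k)_{k ≥ 0} be real numbers satisfying |M_k| < C·(log(Nk+N+a))^q / (k^p + ε) for all k ≥ 0. Then lim_{n→∞} ∑_{k=0}^{n} |M_k| · N·((a/N)_{n+1})² / ((n−k)! · (2a/N)_{n+k+1}) = (N / B(a/N, a/N)) · ∑_{k=0}^{∞} |M_k|, where B(x,y) = Γ(x)Γ(y)/Γ(x+y) is the Beta function; in particular the series ∑_{k=0}^{∞} |M_k| converges. -/

import Mathlib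

open Finset Filter

/-- The Pochhammer symbol (rising factorial) `(x)_n = x(x+1)⋯(x+n−1)`. -/
noncomputable def poch (x : ℝ) (n : ℕ) : ℝ := (ascPochhammer ℝ n).eval x

lemma poch_zero (x : ℝ) : poch x 0 = 1 := by simp [poch]

lemma poch_succ (x : ℝ) (n : ℕ) : poch x (n + 1) = poch x n * (x + n) := by
  simp [poch, ascPochhammer_succ_right]

lemma poch_eq_prod (x : ℝ) (n : ℕ) : poch x n = ∏ j ∈ range n, (x + j) := by
  induction n with
  | zero => simp [poch_zero]
  | succ n ih => rw [poch_succ, ih, prod_range_succ]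

lemma poch_pos {x : ℝ} (hx : 0 < x) (n : ℕ) : 0 < poch x n := by
  induction n with
  | zero => simp [poch_zero]
  | succ n ih =>
      rw [poch_succ]
      exact mul_pos ih (add_pos_of_pos_of_nonneg hx (Nat.cast_nonneg n))

/-- The weight in the sum. -/
noncomputable def Uw (N a : ℕ) (n k : ℕ) : ℝ :=
  (N : ℝ) * poch ((a : ℝ) / N) (n + 1) ^ 2 /
    ((n - k).factorial * poch (2 * (a : ℝ) / N) (n + k + 1))

section Uw

variable {N a : ℕ} (ha : 1 ≤ a) (haN : a ≤ N)
include ha haN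

lemma hx_pos : (0:ℝ) < (a : ℝ) / N := by
  have h1 : (0:ℝ) < a := by exact_mod_cast ha
  have h2 : (0:ℝ) < N := by exact_mod_cast lt_of_lt_of_le (Nat.lt_of_lt_of_le Nat.zero_lt_one ha) haN
  exact div_pos h1 h2

lemma h2x_pos : (0:ℝ) < 2 * (a : ℝ) / N := by
  have := hx_pos ha haN
  have h2 : 2 * (a:ℝ) / N = 2 * ((a:ℝ)/N) := by ring
  rw [h2]; positivity

lemma Uw_pos (n k : ℕ) : 0 < Uw N a n k := by
  have h1p := poch_pos (hx_pos ha haN) (n+1)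
  have h2p := poch_pos (h2x_pos ha haN) (n+k+1)
  have hf : (0:ℝ) < (n-k).factorial := by exact_mod_cast (n-k).factorial_pos
  have hN : (0:ℝ) < N := by
    exact_mod_cast Nat.lt_of_lt_of_le Nat.zero_lt_one (le_trans ha haN)
  unfold Uw
  positivity

lemma Uw_zero_eq {n : ℕ} (hn : 1 ≤ n) :
    Uw N a n 0 = (N:ℝ) * Real.GammaSeq (2 * (a:ℝ)/N) n / (Real.GammaSeq ((a:ℝ)/N) n) ^ 2 := by
  have hn0 : (0:ℝ) < n := by exact_mod_cast hn
  have hP := poch_pos (hx_pos ha haN) (n+1)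
  have hQ := poch_pos (h2x_pos ha haN) (n+1)
  have hf : (0:ℝ) < (n.factorial : ℝ) := by exact_mod_cast n.factorial_pos
  have hnx : (0:ℝ) < (n:ℝ) ^ ((a:ℝ)/N) := Real.rpow_pos_of_pos hn0 _
  have hrpow : ((n:ℝ)) ^ (2*(a:ℝ)/N) = ((n:ℝ) ^ ((a:ℝ)/N)) ^ 2 := by
    rw [show 2*(a:ℝ)/N = ((a:ℝ)/N) * 2 by ring, Real.rpow_mul hn0.le]
    norm_num
  rw [Uw, Real.GammaSeq, Real.GammaSeq, ← poch_eq_prod, ← poch_eq_prod]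
  simp only [Nat.sub_zero, Nat.add_zero]
  rw [hrpow]
  field_simp

lemma Uw_succ {n k : ℕ} (hk : k < n) :
    Uw N a n (k+1) = Uw N a n k * (((n:ℝ) - k) / (2*(a:ℝ)/N + n + k + 1)) := by
  have hk' : k ≤ n := hk.le
  have hfs : (n - k).factorial = (n - (k+1)).factorial * (n - k) := by
    have h : n - k = (n - (k+1)) + 1 := by omega
    rw [h, Nat.factorial_succ]; ring
  have hcast : ((n - k : ℕ) : ℝ) = (n:ℝ) - k := by rw [Nat.cast_sub hk']
  have hps : poch (2*(a:ℝ)/N) (n+(k+1)+1) =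
      poch (2*(a:ℝ)/N) (n+k+1) * (2*(a:ℝ)/N + n + k + 1) := by
    rw [show n+(k+1)+1 = (n+k+1)+1 by ring, poch_succ]
    push_cast
    ring
  have hQ := poch_pos (h2x_pos ha haN) (n+k+1)
  have hfp : (0:ℝ) < ((n-(k+1)).factorial : ℝ) := by
    exact_mod_cast (n-(k+1)).factorial_pos
  have hden : (0:ℝ) < 2*(a:ℝ)/N + n + k + 1 := by
    have := h2x_pos ha haN; positivity
  have hm : (0:ℝ) < ((n - k : ℕ) : ℝ) := by
    have : 0 < n - k := by omega
    exact_mod_cast this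
  have hN0 : (0:ℝ) < (N:ℝ) := by
    exact_mod_cast Nat.lt_of_lt_of_le Nat.zero_lt_one (le_trans ha haN)
  rw [Uw, Uw, hps, hfs, Nat.cast_mul, ← hcast]
  rw [div_mul_div_comm, div_eq_div_iff (by positivity) (by positivity)]
  ring

lemma Uw_prod {n k : ℕ} (hk : k ≤ n) :
    Uw N a n k = Uw N a n 0 * ∏ j ∈ range k, (((n:ℝ) - j) / (2*(a:ℝ)/N + n + j + 1)) := by
  induction k with
  | zero => simp
  | succ k ih =>
      have hk' : k < n := Nat.lt_of_succ_le hk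
      rw [prod_range_succ, ← mul_assoc, ← ih hk'.le, Uw_succ ha haN hk']

lemma Uw_le {n k : ℕ} (hk : k ≤ n) : Uw N a n k ≤ Uw N a n 0 := by
  rw [Uw_prod ha haN hk]
  have h2x := h2x_pos ha haN
  have hpr : ∏ j ∈ range k, (((n:ℝ) - j)/(2*(a:ℝ)/N + n + j + 1)) ≤ 1 := by
    apply Finset.prod_le_one
    · intro j hj
      have hj' : (j:ℝ) ≤ n := by
        exact_mod_cast le_trans (le_of_lt (mem_range.1 hj)) hk
      have hd : (0:ℝ) < 2*(a:ℝ)/N + n + j + 1 := by positivity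
      exact div_nonneg (by linarith) hd.le
    · intro j hj
      have hj' : (j:ℝ) ≤ n := by
        exact_mod_cast le_trans (le_of_lt (mem_range.1 hj)) hk
      have hd : (0:ℝ) < 2*(a:ℝ)/N + n + j + 1 := by positivity
      rw [div_le_one hd]
      have : (0:ℝ) ≤ (j:ℝ) := Nat.cast_nonneg j
      linarith
  calc Uw N a n 0 * ∏ j ∈ range k, (((n:ℝ) - j)/(2*(a:ℝ)/N + n + j + 1))
      ≤ Uw N a n 0 * 1 := mul_le_mul_of_nonneg_left hpr (Uw_pos ha haN n 0).le
    _ = Uw N a n 0 := mul_one _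

lemma Uw_zero_tendsto :
    Tendsto (fun n => Uw N a n 0) atTop
      (nhds ((N:ℝ) * Real.Gamma (2*(a:ℝ)/N) / (Real.Gamma ((a:ℝ)/N)) ^ 2)) := by
  have hGx : Real.Gamma ((a:ℝ)/N) ≠ 0 := (Real.Gamma_pos_of_pos (hx_pos ha haN)).ne'
  have hG2 : Tendsto (fun n => (N:ℝ) * Real.GammaSeq (2*(a:ℝ)/N) n /
      (Real.GammaSeq ((a:ℝ)/N) n)^2) atTop
      (nhds ((N:ℝ) * Real.Gamma (2*(a:ℝ)/N) / (Real.Gamma ((a:ℝ)/N)) ^ 2)) :=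
    ((Real.GammaSeq_tendsto_Gamma (2*(a:ℝ)/N)).const_mul (N:ℝ)).div
      ((Real.GammaSeq_tendsto_Gamma ((a:ℝ)/N)).pow 2) (pow_ne_zero 2 hGx)
  refine Tendsto.congr' ?_ hG2
  filter_upwards [eventually_ge_atTop 1] with n hn
  exact (Uw_zero_eq ha haN hn).symm

lemma Uw_tendsto (k : ℕ) :
    Tendsto (fun n => Uw N a n k) atTop
      (nhds ((N:ℝ) * Real.Gamma (2*(a:ℝ)/N) / (Real.Gamma ((a:ℝ)/N)) ^ 2)) := by
  have h2x := h2x_pos ha haN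
  have hfac : ∀ j : ℕ, Tendsto (fun n : ℕ =>
      ((n:ℝ) - j)/(2*(a:ℝ)/N + n + j + 1)) atTop (nhds 1) := by
    intro j
    have hbase : Tendsto (fun m : ℕ => (m:ℝ)/((m:ℝ) + (2*(a:ℝ)/N + 2*j + 1)))
        atTop (nhds 1) := tendsto_natCast_div_add_atTop _
    have hcomp := hbase.comp (tendsto_sub_atTop_nat j)
    refine Tendsto.congr' ?_ hcomp
    filter_upwards [eventually_ge_atTop j] with n hn
    have hc : ((n - j : ℕ) : ℝ) = (n:ℝ) - j := by rw [Nat.cast_sub hn]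
    simp only [Function.comp_apply, hc]
    ring_nf
  have hprodlim : Tendsto (fun n : ℕ =>
      Uw N a n 0 * ∏ j ∈ range k, (((n:ℝ) - j)/(2*(a:ℝ)/N + n + j + 1)))
      atTop (nhds ((N:ℝ) * Real.Gamma (2*(a:ℝ)/N) / (Real.Gamma ((a:ℝ)/N)) ^ 2
        * ∏ _j ∈ range k, (1:ℝ))) :=
    (Uw_zero_tendsto ha haN).mul (tendsto_finset_prod _ (fun j _ => hfac j))
  rw [prod_const_one, mul_one] at hprodlim
  refine Tendsto.congr' ?_ hprodlim
  filter_upwards [eventually_ge_atTop k] with n hn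
  exact (Uw_prod ha haN hn).symm

end Uw

/-- Lemma 3.2: if `|M_k| < C·(log(Nk+N+a))^q / (k^p + ε)` with `ε > 0`, `p > 1`, `C > 0`,
then `∑_{k=0}^{∞} |M_k|` converges and
`lim_{n→∞} ∑_{k=0}^{n} |M_k|·N((a/N)_{n+1})²/((n−k)!(2a/N)_{n+k+1})
  = (N / B(a/N, a/N)) · ∑_{k=0}^{∞} |M_k|`, where `B(x,y) = Γ(x)Γ(y)/Γ(x+y)`. -/
theorem tendsto_sum_M_U
    (N a : ℕ) (h1 : 1 ≤ a) (h2 : a ≤ N)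
    (ε p q C : ℝ) (hε : 0 < ε) (hp : 1 < p) (hC : 0 < C)
    (M : ℕ → ℝ)
    (hM : ∀ k : ℕ, |M k| <
      C * Real.log ((N : ℝ) * k + N + a) ^ q / ((k : ℝ) ^ p + ε)) :
    Summable (fun k : ℕ => |M k|) ∧
    Tendsto (fun n : ℕ => ∑ k ∈ Finset.range (n + 1),
        |M k| * ((N : ℝ) * poch ((a : ℝ) / N) (n + 1) ^ 2 /
          ((n - k).factorial * poch (2 * (a : ℝ) / N) (n + k + 1))))
      atTop
      (nhds (((N : ℝ) /
          (Real.Gamma ((a : ℝ) / N) * Real.Gamma ((a : ℝ) / N) /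
            Real.Gamma ((a : ℝ) / N + (a : ℝ) / N))) * ∑' k : ℕ, |M k|)) := by
  have hN : 1 ≤ N := le_trans h1 h2
  have hNpos : (0:ℝ) < N := by exact_mod_cast hN
  have hapos : (0:ℝ) < a := by exact_mod_cast h1
  have haN : (a:ℝ) ≤ N := by exact_mod_cast h2
  have hx := hx_pos h1 h2
  have h2x := h2x_pos h1 h2
  -- Summability
  have hsum : Summable fun k : ℕ => |M k| := by
    have hs : (0:ℝ) < p - (p+1)/2 := by linarith
    have hcomp : Tendsto (fun k : ℕ => (N:ℝ) * k + N + a) atTop atTop := by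
      apply tendsto_atTop_add_const_right
      apply tendsto_atTop_add_const_right
      exact Tendsto.const_mul_atTop hNpos tendsto_natCast_atTop_atTop
    have h1' : (fun k : ℕ => Real.log ((N:ℝ)*k + N + a) ^ q)
        =o[atTop] fun k : ℕ => ((N:ℝ)*k + N + a) ^ (p - (p+1)/2) :=
      (isLittleO_log_rpow_rpow_atTop q hs).comp_tendsto hcomp
    have h2' : (fun k : ℕ => ((N:ℝ)*k + N + a) ^ (p - (p+1)/2)) =O[atTop]
        fun k : ℕ => (k:ℝ) ^ (p - (p+1)/2) := by
      rw [Asymptotics.isBigO_iff]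
      refine ⟨(3*(N:ℝ)) ^ (p - (p+1)/2), ?_⟩
      filter_upwards [eventually_ge_atTop 1] with k hk
      have hk1 : (1:ℝ) ≤ (k:ℝ) := by exact_mod_cast hk
      have hle : (N:ℝ)*k + N + a ≤ 3*N*k := by nlinarith
      have h0 : (0:ℝ) ≤ (N:ℝ)*k + N + a := by positivity
      rw [Real.norm_eq_abs, Real.norm_eq_abs, abs_of_nonneg (Real.rpow_nonneg h0 _),
        abs_of_nonneg (Real.rpow_nonneg (Nat.cast_nonneg k) _)]
      calc ((N:ℝ)*k + N + a)^(p - (p+1)/2) ≤ (3*(N:ℝ)*k)^(p - (p+1)/2) :=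
            Real.rpow_le_rpow h0 hle hs.le
        _ = (3*(N:ℝ))^(p - (p+1)/2) * (k:ℝ)^(p - (p+1)/2) := by
            rw [Real.mul_rpow (by positivity) (Nat.cast_nonneg k)]
    have hMO : (fun k : ℕ => |M k|) =O[atTop]
        fun k : ℕ => Real.log ((N:ℝ)*k + N + a) ^ q * (k:ℝ)^(-p) := by
      rw [Asymptotics.isBigO_iff]
      refine ⟨C, ?_⟩
      filter_upwards [eventually_ge_atTop 1] with k hk
      have hk1 : (1:ℝ) ≤ (k:ℝ) := by exact_mod_cast hk
      have hargs : (1:ℝ) ≤ (N:ℝ)*k + N + a := by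
        have h0 : (0:ℝ) ≤ (N:ℝ)*k := mul_nonneg hNpos.le (Nat.cast_nonneg k)
        have hN1 : (1:ℝ) ≤ (N:ℝ) := by exact_mod_cast hN
        linarith
      have hlogpos : (0:ℝ) ≤ Real.log ((N:ℝ)*k+N+a) := Real.log_nonneg hargs
      have hLq : (0:ℝ) ≤ Real.log ((N:ℝ)*k+N+a) ^ q := Real.rpow_nonneg hlogpos q
      have hkp : (0:ℝ) < (k:ℝ)^p := Real.rpow_pos_of_pos (by linarith) p
      have hnegp : (0:ℝ) ≤ (k:ℝ)^(-p) := Real.rpow_nonneg (by positivity) _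
      rw [Real.norm_eq_abs, abs_abs, Real.norm_eq_abs,
        abs_of_nonneg (mul_nonneg hLq hnegp)]
      have key : C * Real.log ((N:ℝ)*k+N+a)^q / ((k:ℝ)^p + ε)
          ≤ C * (Real.log ((N:ℝ)*k+N+a)^q * (k:ℝ)^(-p)) := by
        rw [Real.rpow_neg (by positivity), show
          C * (Real.log ((N:ℝ)*k+N+a)^q * ((k:ℝ)^p)⁻¹)
            = C * Real.log ((N:ℝ)*k+N+a)^q / ((k:ℝ)^p) by ring]
        apply div_le_div_of_nonneg_left (mul_nonneg hC.le hLq) hkp (by linarith)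
      exact le_trans (hM k).le key
    have hchain : (fun k : ℕ => |M k|) =O[atTop]
        fun k : ℕ => (k:ℝ) ^ (p - (p+1)/2) * (k:ℝ)^(-p) :=
      hMO.trans ((h1'.isBigO.mul (Asymptotics.isBigO_refl
        (fun k : ℕ => (k:ℝ)^(-p)) atTop)).trans
        (h2'.mul (Asymptotics.isBigO_refl _ _)))
    have heq : (fun k : ℕ => (k:ℝ) ^ (p - (p+1)/2) * (k:ℝ)^(-p))
        =ᶠ[atTop] fun k : ℕ => (k:ℝ) ^ (-((p+1)/2)) := by
      filter_upwards [eventually_ge_atTop 1] with k hk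
      have hk0 : (0:ℝ) < k := by exact_mod_cast hk
      rw [← Real.rpow_add hk0]
      ring_nf
    refine summable_of_isBigO_nat ?_ (hchain.trans_eventuallyEq heq)
    exact Real.summable_nat_rpow.2 (by linarith)
  refine ⟨hsum, ?_⟩
  set L : ℝ := (N:ℝ) * Real.Gamma (2*(a:ℝ)/N) / (Real.Gamma ((a:ℝ)/N))^2 with hL
  obtain ⟨D, hD⟩ : ∃ D : ℝ, ∀ n, Uw N a n 0 ≤ D := by
    obtain ⟨D, hD⟩ := (Uw_zero_tendsto h1 h2).bddAbove_range
    exact ⟨D, fun n => hD (Set.mem_range_self n)⟩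
  have hD0 : 0 ≤ D := le_trans (Uw_pos h1 h2 0 0).le (hD 0)
  set F : ℕ → ℕ → ℝ := fun n k => if k ≤ n then |M k| * Uw N a n k else 0 with hF
  have hmain : Tendsto (fun n => ∑' k, F n k) atTop (nhds (∑' k, |M k| * L)) := by
    apply tendsto_tsum_of_dominated_convergence (bound := fun k => |M k| * D)
      (hsum.mul_right D)
    · intro k
      have h := (Uw_tendsto h1 h2 k).const_mul (|M k|)
      rw [← hL] at h
      refine Tendsto.congr' ?_ h
      filter_upwards [eventually_ge_atTop k] with n hn
      simp only [hF, if_pos hn]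
    · refine Eventually.of_forall fun n k => ?_
      by_cases h : k ≤ n
      · simp only [hF, if_pos h, Real.norm_eq_abs]
        rw [abs_of_nonneg (mul_nonneg (abs_nonneg _) (Uw_pos h1 h2 n k).le)]
        exact mul_le_mul_of_nonneg_left (le_trans (Uw_le h1 h2 h) (hD n)) (abs_nonneg _)
      · simp only [hF, if_neg h, norm_zero]
        exact mul_nonneg (abs_nonneg _) hD0
  have hsumeq : ∀ n : ℕ, (∑' k, F n k) = ∑ k ∈ Finset.range (n + 1),
      |M k| * ((N : ℝ) * poch ((a : ℝ) / N) (n + 1) ^ 2 /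
        ((n - k).factorial * poch (2 * (a : ℝ) / N) (n + k + 1))) := by
    intro n
    rw [tsum_eq_sum (s := Finset.range (n+1))
      (f := F n)
      (fun k hk => if_neg (fun h => hk (mem_range.2 (Nat.lt_succ_of_le h))))]
    apply Finset.sum_congr rfl
    intro k hk
    have hk' : k ≤ n := Nat.lt_succ_iff.1 (mem_range.1 hk)
    simp only [hF, if_pos hk']
    rfl
  have hval : (∑' k, |M k| * L) = ((N : ℝ) /
      (Real.Gamma ((a : ℝ) / N) * Real.Gamma ((a : ℝ) / N) /
        Real.Gamma ((a : ℝ) / N + (a : ℝ) / N))) * ∑' k : ℕ, |M k| := by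
    rw [tsum_mul_right, mul_comm]
    congr 1
    have h2xeq : (a:ℝ)/N + (a:ℝ)/N = 2*(a:ℝ)/N := by ring
    rw [hL, h2xeq]
    have hG2x : Real.Gamma (2*(a:ℝ)/N) ≠ 0 := (Real.Gamma_pos_of_pos h2x).ne'
    have hGx : Real.Gamma ((a:ℝ)/N) ≠ 0 := (Real.Gamma_pos_of_pos hx).ne'
    field_simp
  rw [← hval]
  exact hmain.congr (fun n => hsumeq n)
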